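/- For every x ∈ ℝ^n with x ≥ 0, the maximum deviation DEV_i(x) = max_{y∈Y_i} Σ_{j∈J} Σ_{k∈K} d^k_{ij} x_j y_{jk} equals the minimum of −Σ_{k∈K} l_k v_k + Σ_{k∈K} u_k w_k + Σ_{j∈J} z_j over all v, w ∈ ℝ^K_{≥0} and z ∈ ℝ^J_{≥0} satisfying −v_k + w_k + z_j ≥ d^k_{ij} x_j for all j ∈ J and k ∈ K, and this minimum is attained. -/

import Mathlib

open Finset

/-- The band index set `K = {K⁻, …, -1, 0, 1, …, K⁺}`. -/
noncomputable def bands (Km Kp : ℤ) : Finset ℤ := Finset.Icc Km Kp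

/-- `Y_i`: the set of feasible 0-1 deviation assignments. -/
def memY (n : ℕ) (Km Kp : ℤ) (l u : ℤ → ℕ) (y : Fin n → ℤ → ℕ) : Prop :=
  (∀ j : Fin n, ∀ k ∈ bands Km Kp, y j k ≤ 1) ∧
  (∀ k ∈ bands Km Kp, l k ≤ ∑ j : Fin n, y j k ∧ ∑ j : Fin n, y j k ≤ u k) ∧
  (∀ j : Fin n, ∑ k ∈ bands Km Kp, y j k ≤ 1)

/-- The set of total deviations `∑_j ∑_k d^k_{ij} x_j y_{jk}` achievable by assignments in
`Y_i`; its maximum is `DEV_i(x)`. -/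
def devSet (n : ℕ) (Km Kp : ℤ) (l u : ℤ → ℕ) (d : Fin n → ℤ → ℝ) (x : Fin n → ℝ) :
    Set ℝ :=
  {v | ∃ y : Fin n → ℤ → ℕ, memY n Km Kp l u y ∧
    v = ∑ j : Fin n, ∑ k ∈ bands Km Kp, d j k * x j * (y j k : ℝ)}

section Chains

variable {n : ℕ}

/-- number of items assigned to node `o` -/
def cnt (σ : Fin n → Option ℤ) (o : Option ℤ) : ℕ :=
  (Finset.univ.filter fun j => σ j = o).card

lemma cnt_eq_sum (σ : Fin n → Option ℤ) (o : Option ℤ) :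
    (cnt σ o : ℤ) = ∑ j : Fin n, (if σ j = o then (1:ℤ) else 0) := by
  rw [cnt, Finset.card_filter]; push_cast; rfl

lemma cnt_update (σ : Fin n → Option ℤ) (j : Fin n) (b o : Option ℤ) :
    (cnt (Function.update σ j b) o : ℤ)
      = (cnt σ o : ℤ) - (if σ j = o then 1 else 0) + (if b = o then 1 else 0) := by
  have h1 : (fun j' => if Function.update σ j b j' = o then (1:ℤ) else 0)
      = Function.update (fun j' => if σ j' = o then (1:ℤ) else 0) j
          (if b = o then (1:ℤ) else 0) := by
    funext j'
    by_cases h : j' = j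
    · subst h; simp [Function.update_self]
    · simp [Function.update_of_ne h]
  rw [cnt_eq_sum, cnt_eq_sum, h1, Finset.sum_update_of_mem (Finset.mem_univ j)]
  rw [← Finset.add_sum_erase _ _ (Finset.mem_univ j), Finset.sdiff_singleton_eq_erase]
  ring

variable (σ : Fin n → Option ℤ) (C : Fin n → Option ℤ → ℝ)

/-- total cost of an assignment -/
def objv : ℝ := ∑ j : Fin n, C j (σ j)

lemma objv_update (j : Fin n) (b : Option ℤ) :
    objv (Function.update σ j b) C = objv σ C - C j (σ j) + C j b := by
  have h1 : (fun j' => C j' (Function.update σ j b j'))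
      = Function.update (fun j' => C j' (σ j')) j (C j b) := by
    funext j'
    by_cases h : j' = j
    · subst h; simp [Function.update_self]
    · simp [Function.update_of_ne h]
  rw [objv, objv, h1, Finset.sum_update_of_mem (Finset.mem_univ j)]
  rw [← Finset.add_sum_erase _ (fun j' => C j' (σ j')) (Finset.mem_univ j),
    Finset.sdiff_singleton_eq_erase]
  ring

/-- `IsChain σ a L c` : `L` is a list of moves `(item, target-node)`; the item of each move
is currently at the previous node (starting at `a`) and the last target is `c`. -/
inductive IsChn : Option ℤ → List (Fin n × Option ℤ) → Option ℤ → Prop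
  | nil (a : Option ℤ) : IsChn a [] a
  | cons {j : Fin n} {a b c : Option ℤ} {L : List (Fin n × Option ℤ)} :
      σ j = a → IsChn b L c → IsChn a ((j, b) :: L) c

/-- total gain of the moves of a chain -/
def gain (L : List (Fin n × Option ℤ)) : ℝ :=
  (L.map fun m => C m.1 m.2 - C m.1 (σ m.1)).sum

/-- the assignment after performing all moves -/
def applyC (L : List (Fin n × Option ℤ)) : Fin n → Option ℤ :=
  L.foldl (fun f m => Function.update f m.1 m.2) σ

end Chains

section ChainLemmas

variable {n : ℕ} {σ σ' : Fin n → Option ℤ} {C : Fin n → Option ℤ → ℝ}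
  {a b c : Option ℤ} {L : List (Fin n × Option ℤ)}

lemma isChn_congr (h : ∀ m ∈ L, σ' m.1 = σ m.1) (hch : IsChn σ a L c) :
    IsChn σ' a L c := by
  induction L generalizing a with
  | nil => rcases hch with _ | _; exact IsChn.nil _
  | cons m L ih =>
    obtain ⟨j, b⟩ := m
    rcases hch with _ | @⟨_, _, _, _, _, hj, hch'⟩
    exact IsChn.cons (by rw [h (j, b) (by simp)]; exact hj)
      (ih (fun m hm => h m (by simp [hm])) hch')

lemma gain_congr (h : ∀ m ∈ L, σ' m.1 = σ m.1) : gain σ' C L = gain σ C L := by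
  unfold gain
  congr 1
  exact List.map_congr_left fun m hm => by rw [h m hm]

lemma chn_map_fst (hch : IsChn σ a L c) :
    L.map (fun m => σ m.1) = (a :: L.map Prod.snd).dropLast := by
  induction L generalizing a with
  | nil => rcases hch with _ | _; simp
  | cons m L ih =>
    obtain ⟨j, b⟩ := m
    rcases hch with _ | @⟨_, _, _, _, _, hj, hch'⟩
    simp only [List.map_cons]
    rw [ih hch', hj]
    exact (List.dropLast_cons_of_ne_nil (by simp)).symm

lemma chn_snd_last (hch : IsChn σ a L c) (hL : L ≠ []) :
    L.map Prod.snd = (L.map Prod.snd).dropLast ++ [c] := by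
  induction L generalizing a with
  | nil => simp at hL
  | cons m L ih =>
    obtain ⟨j, b⟩ := m
    rcases hch with _ | @⟨_, _, _, _, _, hj, hch'⟩
    rcases eq_or_ne L [] with rfl | hL'
    · rcases hch' with _ | _; simp
    · have h := ih hch' hL'
      simp only [List.map_cons]
      rw [List.dropLast_cons_of_ne_nil (by simpa using hL'), List.cons_append]
      congr 1

lemma chn_fst_nodup (hch : IsChn σ a L c) (hnd : ((a :: L.map Prod.snd).dropLast).Nodup) :
    (L.map Prod.fst).Nodup := by
  have h := chn_map_fst hch
  have h2 : (L.map (fun m => σ m.1)).Nodup := by rw [h]; exact hnd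
  have h3 : ((L.map Prod.fst).map σ).Nodup := by
    rw [List.map_map]; exact h2
  exact h3.of_map σ

lemma chn_fst_nodup_of_nodup (hch : IsChn σ a L c) (hnd : (a :: L.map Prod.snd).Nodup) :
    (L.map Prod.fst).Nodup :=
  chn_fst_nodup hch (hnd.sublist (List.dropLast_sublist _))

lemma chn_fst_nodup_cycle (hch : IsChn σ a L a) (hnd : (L.map Prod.snd).Nodup) :
    (L.map Prod.fst).Nodup := by
  rcases eq_or_ne L [] with rfl | hL
  · simp
  · apply chn_fst_nodup hch
    rw [List.dropLast_cons_of_ne_nil (by simpa using hL)]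
    refine List.nodup_cons.2 ⟨fun ha => ?_, hnd.sublist (List.dropLast_sublist _)⟩
    have h := chn_snd_last hch hL
    rw [h] at hnd
    exact (List.disjoint_of_nodup_append hnd) ha (by simp)

/-- main shift lemma -/
lemma shift_main (hch : IsChn σ a L c) (hnd : (L.map Prod.fst).Nodup) :
    (∀ o, (cnt (applyC σ L) o : ℤ)
        = (cnt σ o : ℤ) - (if a = o then 1 else 0) + (if c = o then 1 else 0)) ∧
    objv (applyC σ L) C = objv σ C + gain σ C L ∧
    (∀ j : Fin n, applyC σ L j = σ j ∨ ∃ m ∈ L, applyC σ L j = m.2) := by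
  induction L generalizing σ a with
  | nil =>
    rcases hch with _ | _
    refine ⟨fun o => by simp [applyC], by simp [applyC, gain, objv], fun j => Or.inl rfl⟩
  | cons m L ih =>
    obtain ⟨j, b⟩ := m
    rcases hch with _ | @⟨_, _, _, _, _, hj, hch'⟩
    simp only [List.map_cons, List.nodup_cons] at hnd
    set σ₁ := Function.update σ j b with hσ₁
    have hagree : ∀ m ∈ L, σ₁ m.1 = σ m.1 := fun m hm =>
      Function.update_of_ne (fun h => hnd.1 (by rw [← h]; exact List.mem_map_of_mem (f := Prod.fst) hm)) _ _
    have hch₁ : IsChn σ₁ b L c := isChn_congr hagree hch'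
    have hap : applyC σ ((j, b) :: L) = applyC σ₁ L := rfl
    obtain ⟨hcnt, hobj, hval⟩ := ih hch₁ hnd.2
    refine ⟨fun o => ?_, ?_, fun j' => ?_⟩
    · rw [hap, hcnt o, hσ₁, cnt_update, hj]; ring
    · rw [hap, hobj, hσ₁, objv_update, gain_congr hagree]
      simp only [gain, List.map_cons, List.sum_cons, hj]
      ring
    · rcases hval j' with h | ⟨m', hm', h⟩
      · rw [hap, h, hσ₁]
        by_cases hjj : j' = j
        · subst hjj; right; exact ⟨(j', b), by simp, by simp⟩
        · left; exact Function.update_of_ne hjj _ _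
      · right; exact ⟨m', by simp [hm'], by rw [hap, h]⟩

end ChainLemmas

section Split

variable {n : ℕ} {σ : Fin n → Option ℤ} {C : Fin n → Option ℤ → ℝ}
  {a b c : Option ℤ} {L L₁ L₂ : List (Fin n × Option ℤ)}

lemma chn_append (h1 : IsChn σ a L₁ b) (h2 : IsChn σ b L₂ c) : IsChn σ a (L₁ ++ L₂) c := by
  induction L₁ generalizing a with
  | nil => rcases h1 with _ | _; exact h2
  | cons m L ih =>
    obtain ⟨j, b'⟩ := m
    rcases h1 with _ | @⟨_, _, _, _, _, hj, hch'⟩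
    exact IsChn.cons hj (ih hch')

lemma gain_append : gain σ C (L₁ ++ L₂) = gain σ C L₁ + gain σ C L₂ := by
  simp [gain]

lemma chn_split (hch : IsChn σ a L c) (hb : b ∈ a :: L.map Prod.snd) :
    ∃ L₁ L₂, L = L₁ ++ L₂ ∧ IsChn σ a L₁ b ∧ IsChn σ b L₂ c := by
  induction L generalizing a with
  | nil =>
    rcases hch with _ | _
    simp only [List.map_nil, List.mem_singleton] at hb
    exact ⟨[], [], by simp, hb ▸ IsChn.nil b, hb ▸ IsChn.nil b⟩
  | cons m L ih =>
    obtain ⟨j, b'⟩ := m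
    rcases hch with _ | @⟨_, _, _, _, _, hj, hch'⟩
    rcases List.mem_cons.1 hb with rfl | hb'
    · exact ⟨[], (j, b') :: L, rfl, IsChn.nil b, IsChn.cons hj hch'⟩
    · obtain ⟨L₁, L₂, rfl, hc1, hc2⟩ := ih hch' hb'
      exact ⟨(j, b') :: L₁, L₂, rfl, IsChn.cons hj hc1, hc2⟩

lemma chn_mem_last (hch : IsChn σ a L c) (hL : L ≠ []) : c ∈ L.map Prod.snd := by
  rw [chn_snd_last hch hL]; simp

end Split

section Opt

variable {n : ℕ}

/-- feasibility of an assignment -/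
def feas (V : Finset (Option ℤ)) (lo hi : Option ℤ → ℕ) (σ : Fin n → Option ℤ) : Prop :=
  (∀ j, σ j ∈ V) ∧ ∀ o ∈ V, lo o ≤ cnt σ o ∧ cnt σ o ≤ hi o

variable {V : Finset (Option ℤ)} {lo hi : Option ℤ → ℕ} {C : Fin n → Option ℤ → ℝ}
  {σ : Fin n → Option ℤ} {a b c : Option ℤ} {L : List (Fin n × Option ℤ)}

lemma shift_feas (hfeas : feas V lo hi σ) (hch : IsChn σ a L c)
    (hnd : (L.map Prod.fst).Nodup) (hV : ∀ m ∈ L, m.2 ∈ V)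
    (hsrc : c = a ∨ lo a < cnt σ a) (hsnk : c = a ∨ cnt σ c < hi c) :
    feas V lo hi (applyC σ L) := by
  obtain ⟨hcnt, hobj, hval⟩ := shift_main (C := fun _ _ => (0:ℝ)) hch hnd
  constructor
  · intro j
    rcases hval j with h | ⟨m, hm, h⟩
    · rw [h]; exact hfeas.1 j
    · rw [h]; exact hV m hm
  · intro o ho
    have h := hcnt o
    obtain ⟨h1, h2⟩ := hfeas.2 o ho
    split_ifs at h with hao hco hco
    · omega
    · rcases hsrc with rfl | hsrc
      · exact absurd hao hco
      · subst hao; omega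
    · rcases hsnk with rfl | hsnk
      · exact absurd hco hao
      · subst hco; omega
    · omega

lemma cycle_nonpos (hfeas : feas V lo hi σ)
    (hopt : ∀ τ, feas V lo hi τ → objv τ C ≤ objv σ C)
    (hch : IsChn σ b L b) (hnd : (L.map Prod.snd).Nodup)
    (hV : ∀ m ∈ L, m.2 ∈ V) : gain σ C L ≤ 0 := by
  have hndf := chn_fst_nodup_cycle hch hnd
  have hf := shift_feas hfeas hch hndf hV (Or.inl rfl) (Or.inl rfl)
  have hobj := (shift_main (C := C) hch hndf).2.1
  have h := hopt _ hf
  rw [hobj] at h; linarith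

lemma path_nonpos (hfeas : feas V lo hi σ)
    (hopt : ∀ τ, feas V lo hi τ → objv τ C ≤ objv σ C)
    (hch : IsChn σ a L c) (hnd : (a :: L.map Prod.snd).Nodup)
    (hV : ∀ m ∈ L, m.2 ∈ V)
    (hsrc : lo a < cnt σ a) (hsnk : cnt σ c < hi c) : gain σ C L ≤ 0 := by
  have hndf := chn_fst_nodup_of_nodup hch hnd
  have hf := shift_feas hfeas hch hndf hV (Or.inr hsrc) (Or.inr hsnk)
  have hobj := (shift_main (C := C) hch hndf).2.1
  have h := hopt _ hf
  rw [hobj] at h; linarith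

end Opt

section Pot

variable {n : ℕ}

/-- bound on one item's contribution to a gain -/
def Bj (V : Finset (Option ℤ)) (C : Fin n → Option ℤ → ℝ) (j : Fin n) : ℝ :=
  2 * ∑ o ∈ V, |C j o|

/-- a number exceeding any chain gain -/
def Mbig (V : Finset (Option ℤ)) (C : Fin n → Option ℤ → ℝ) : ℝ :=
  1 + ∑ j : Fin n, Bj V C j

/-- starting value: `0` at source nodes, `-M` elsewhere -/
def start (V : Finset (Option ℤ)) (lo : Option ℤ → ℕ) (C : Fin n → Option ℤ → ℝ)
    (σ : Fin n → Option ℤ) (a : Option ℤ) : ℝ :=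
  if lo a < cnt σ a then 0 else -(Mbig V C)

/-- the set of chain values ending at `b` -/
def PS (V : Finset (Option ℤ)) (lo : Option ℤ → ℕ) (C : Fin n → Option ℤ → ℝ)
    (σ : Fin n → Option ℤ) (b : Option ℤ) : Set ℝ :=
  {r | ∃ a L, IsChn σ a L b ∧ (a :: L.map Prod.snd).Nodup ∧ a ∈ V ∧
    (∀ m ∈ L, m.2 ∈ V) ∧ r = start V lo C σ a + gain σ C L}

/-- the potential -/
noncomputable def pot (V : Finset (Option ℤ)) (lo : Option ℤ → ℕ)
    (C : Fin n → Option ℤ → ℝ) (σ : Fin n → Option ℤ) (b : Option ℤ) : ℝ :=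
  sSup (PS V lo C σ b)

variable {V : Finset (Option ℤ)} {lo hi : Option ℤ → ℕ} {C : Fin n → Option ℤ → ℝ}
  {σ : Fin n → Option ℤ} {a b c : Option ℤ} {L : List (Fin n × Option ℤ)}

lemma Bj_nonneg (j : Fin n) : 0 ≤ Bj V C j := by
  have : (0:ℝ) ≤ ∑ o ∈ V, |C j o| := Finset.sum_nonneg fun o _ => abs_nonneg _
  unfold Bj; linarith

lemma Mbig_pos : 0 < Mbig V C := by
  have : (0:ℝ) ≤ ∑ j : Fin n, Bj V C j := Finset.sum_nonneg fun j _ => Bj_nonneg j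
  unfold Mbig; linarith

lemma gain_le_sum (hch : IsChn σ a L c) (hnd : (L.map Prod.fst).Nodup)
    (hV : ∀ m ∈ L, m.2 ∈ V) (hσV : ∀ j, σ j ∈ V) :
    gain σ C L ≤ ∑ j : Fin n, Bj V C j := by
  have h1 : gain σ C L ≤ (L.map fun m => Bj V C m.1).sum := by
    unfold gain
    apply List.sum_le_sum
    intro m hm
    have hb : |C m.1 m.2| ≤ ∑ o ∈ V, |C m.1 o| :=
      Finset.single_le_sum (f := fun o => |C m.1 o|) (fun o _ => abs_nonneg _) (hV m hm)
    have hs : |C m.1 (σ m.1)| ≤ ∑ o ∈ V, |C m.1 o| :=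
      Finset.single_le_sum (f := fun o => |C m.1 o|) (fun o _ => abs_nonneg _) (hσV m.1)
    unfold Bj
    have h2 := neg_abs_le (C m.1 m.2)
    have h3 := le_abs_self (C m.1 m.2)
    have h4 := neg_abs_le (C m.1 (σ m.1))
    have h5 := le_abs_self (C m.1 (σ m.1))
    linarith
  have h2 : (L.map fun m => Bj V C m.1).sum = ((L.map Prod.fst).map (Bj V C)).sum := by
    rw [List.map_map]; rfl
  have h3 : ((L.map Prod.fst).map (Bj V C)).sum
      = ∑ j ∈ (L.map Prod.fst).toFinset, Bj V C j := (List.sum_toFinset _ hnd).symm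
  have h4 : ∑ j ∈ (L.map Prod.fst).toFinset, Bj V C j ≤ ∑ j : Fin n, Bj V C j :=
    Finset.sum_le_sum_of_subset_of_nonneg (Finset.subset_univ _)
      (fun j _ _ => Bj_nonneg j)
  linarith

lemma lists_finite {α : Type*} {s : Set α} (hs : s.Finite) (m : ℕ) :
    {L : List α | L.length ≤ m ∧ ∀ x ∈ L, x ∈ s}.Finite := by
  induction m with
  | zero =>
    apply Set.Finite.subset (Set.finite_singleton ([] : List α))
    rintro L ⟨hlen, -⟩
    simp [List.length_eq_zero_iff.1 (Nat.le_zero.1 hlen)]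
  | succ m ih =>
    apply Set.Finite.subset ((Set.finite_singleton ([] : List α)).union
      (Set.Finite.image2 List.cons hs ih))
    rintro L ⟨hlen, hmem⟩
    rcases L with _ | ⟨x, L⟩
    · exact Or.inl rfl
    · refine Or.inr (Set.mem_image2_of_mem (hmem x (by simp)) ⟨?_, fun y hy => hmem y (by simp [hy])⟩)
      simpa using hlen

lemma PS_finite (b : Option ℤ) : (PS V lo C σ b).Finite := by
  have hfin : ({L : List (Fin n × Option ℤ) |
      L.length ≤ V.card ∧ ∀ x ∈ L, x ∈ (Set.univ ×ˢ (V : Set (Option ℤ)))}).Finite :=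
    lists_finite (Set.Finite.prod (Set.finite_univ) V.finite_toSet) V.card
  apply Set.Finite.subset (Set.Finite.image
    (fun q : Option ℤ × List (Fin n × Option ℤ) => start V lo C σ q.1 + gain σ C q.2)
    (Set.Finite.prod V.finite_toSet hfin))
  rintro r ⟨a, L, hch, hnd, haV, hLV, rfl⟩
  refine ⟨(a, L), ⟨haV, ?_, fun m hm => ⟨trivial, hLV m hm⟩⟩, rfl⟩
  have h1 : (L.map Prod.snd).Nodup := (List.nodup_cons.1 hnd).2
  have h2 : (L.map Prod.snd).toFinset ⊆ V := by
    intro o ho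
    obtain ⟨m, hm, rfl⟩ := List.mem_map.1 (List.mem_toFinset.1 ho)
    exact hLV m hm
  calc L.length = (L.map Prod.snd).length := (List.length_map _).symm
    _ = (L.map Prod.snd).toFinset.card := (List.toFinset_card_of_nodup h1).symm
    _ ≤ V.card := Finset.card_le_card h2

lemma PS_nonempty (hb : b ∈ V) : (PS V lo C σ b).Nonempty :=
  ⟨start V lo C σ b, b, [], IsChn.nil b, by simp, hb, by simp, by simp [gain]⟩

lemma pot_mem (hb : b ∈ V) : pot V lo C σ b ∈ PS V lo C σ b :=
  Set.Nonempty.csSup_mem (PS_nonempty hb) (PS_finite b)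

lemma le_pot {r : ℝ} (hr : r ∈ PS V lo C σ b) : r ≤ pot V lo C σ b :=
  le_csSup (PS_finite b).bddAbove hr

lemma start_le_pot (hb : b ∈ V) : start V lo C σ b ≤ pot V lo C σ b :=
  le_pot ⟨b, [], IsChn.nil b, by simp, hb, by simp, by simp [gain]⟩

end Pot

section PotMain

variable {n : ℕ} {V : Finset (Option ℤ)} {lo hi : Option ℤ → ℕ} {C : Fin n → Option ℤ → ℝ}
  {σ : Fin n → Option ℤ} {b : Option ℤ}

/-- Bellman inequality for the potential -/
lemma pot_bellman (hfeas : feas V lo hi σ)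
    (hopt : ∀ τ, feas V lo hi τ → objv τ C ≤ objv σ C)
    (j : Fin n) (hb : b ∈ V) :
    pot V lo C σ (σ j) + (C j b - C j (σ j)) ≤ pot V lo C σ b := by
  obtain ⟨a₀, L, hch, hnd, haV, hLV, hr⟩ := pot_mem (lo := lo) (C := C) (b := σ j) (hfeas.1 j)
  by_cases hbmem : b ∈ a₀ :: L.map Prod.snd
  · -- b occurs on the chain: split and use a nonpositive cycle
    obtain ⟨L₁, L₂, rfl, hc1, hc2⟩ := chn_split hch hbmem
    have hcyc : IsChn σ b (L₂ ++ [(j, b)]) b :=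
      chn_append hc2 (IsChn.cons rfl (IsChn.nil b))
    have hmsnd : ((L₁ ++ L₂).map Prod.snd) = L₁.map Prod.snd ++ L₂.map Prod.snd :=
      List.map_append
    have hnd' : (a₀ :: (L₁.map Prod.snd ++ L₂.map Prod.snd)).Nodup := by rwa [hmsnd] at hnd
    have hndapp : ((a₀ :: L₁.map Prod.snd) ++ L₂.map Prod.snd).Nodup := by
      simpa using hnd'
    have hbL1 : b ∈ a₀ :: L₁.map Prod.snd := by
      rcases eq_or_ne L₁ [] with rfl | hL1
      · rcases hc1 with _ | _; simp
      · exact List.mem_cons_of_mem _ (chn_mem_last hc1 hL1)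
    have hbnotL2 : b ∉ L₂.map Prod.snd :=
      fun hmem => (List.disjoint_of_nodup_append hndapp) hbL1 hmem
    have hcycnd : ((L₂ ++ [(j, b)]).map Prod.snd).Nodup := by
      rw [List.map_append]
      simp only [List.map_cons, List.map_nil]
      rw [List.nodup_append]
      refine ⟨((List.nodup_cons.1 hnd').2.sublist (List.sublist_append_right _ _)), by simp, ?_⟩
      intro o ho
      simp only [List.mem_singleton]
      rintro _ rfl rfl
      exact hbnotL2 ho
    have hcycV : ∀ m ∈ L₂ ++ [(j, b)], m.2 ∈ V := by
      intro m hm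
      rcases List.mem_append.1 hm with h | h
      · exact hLV m (by simp [h])
      · simp only [List.mem_singleton] at h; subst h; exact hb
    have hcyc0 : gain σ C (L₂ ++ [(j, b)]) ≤ 0 :=
      cycle_nonpos hfeas hopt hcyc hcycnd hcycV
    have hpre : start V lo C σ a₀ + gain σ C L₁ ≤ pot V lo C σ b := by
      apply le_pot
      refine ⟨a₀, L₁, hc1, ?_, haV, fun m hm => hLV m (by simp [hm]), rfl⟩
      exact hnd'.sublist (by
        refine List.cons_sublist_cons.2 ?_
        exact List.sublist_append_left _ _)
    have hgadd : gain σ C (L₁ ++ L₂) = gain σ C L₁ + gain σ C L₂ := gain_append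
    have hgcyc : gain σ C (L₂ ++ [(j, b)]) = gain σ C L₂ + (C j b - C j (σ j)) := by
      rw [gain_append]; simp [gain]
    rw [hr, hgadd]
    linarith
  · -- b new: extend the chain
    apply le_pot
    refine ⟨a₀, L ++ [(j, b)], chn_append hch (IsChn.cons rfl (IsChn.nil b)), ?_, haV, ?_, ?_⟩
    · rw [List.map_append]
      simp only [List.map_cons, List.map_nil]
      have : (a₀ :: (L.map Prod.snd ++ [b])) = (a₀ :: L.map Prod.snd) ++ [b] := by simp
      rw [this, List.nodup_append]
      exact ⟨hnd, by simp, fun o ho => by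
        simp only [List.mem_singleton]; rintro _ rfl rfl; exact hbmem ho⟩
    · intro m hm
      rcases List.mem_append.1 hm with h | h
      · exact hLV m h
      · simp only [List.mem_singleton] at h; subst h; exact hb
    · rw [gain_append, hr]
      simp only [gain, List.map_cons, List.map_nil, List.sum_cons, List.sum_nil]
      ring

/-- a node with slack lower bound has nonnegative potential -/
lemma pot_nonneg_of_src (hb : b ∈ V) (hsrc : lo b < cnt σ b) : 0 ≤ pot V lo C σ b := by
  have := start_le_pot (lo := lo) (C := C) (σ := σ) hb
  rwa [start, if_pos hsrc] at this

/-- a node with positive potential is at its upper capacity -/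
lemma pot_pos_full (hfeas : feas V lo hi σ)
    (hopt : ∀ τ, feas V lo hi τ → objv τ C ≤ objv σ C)
    (hb : b ∈ V) (hpos : 0 < pot V lo C σ b) : cnt σ b = hi b := by
  obtain ⟨a, L, hch, hnd, haV, hLV, hr⟩ := pot_mem (lo := lo) (C := C) (b := b) hb
  have hgle : gain σ C L ≤ ∑ j : Fin n, Bj V C j :=
    gain_le_sum hch (chn_fst_nodup_of_nodup hch hnd) hLV hfeas.1
  have hstart : start V lo C σ a = 0 := by
    rw [start]
    split_ifs with h
    · rfl
    · exfalso
      rw [hr, start, if_neg h] at hpos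
      have h3 : Mbig V C = 1 + ∑ j : Fin n, Bj V C j := rfl
      linarith
  have hsrc : lo a < cnt σ a := by
    by_contra h
    rw [start, if_neg h] at hstart
    have := Mbig_pos (V := V) (C := C)
    linarith
  have hgpos : 0 < gain σ C L := by rw [hr, hstart] at hpos; linarith
  by_contra hne
  have hlt : cnt σ b < hi b := lt_of_le_of_ne (hfeas.2 b hb).2 hne
  exact absurd (path_nonpos hfeas hopt hch hnd hLV hsrc hlt) (by linarith)

end PotMain

section PotNone

variable {n : ℕ} {V : Finset (Option ℤ)} {lo hi : Option ℤ → ℕ} {C : Fin n → Option ℤ → ℝ}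
  {σ : Fin n → Option ℤ}

lemma start_nonpos (a : Option ℤ) : start V lo C σ a ≤ 0 := by
  rw [start]
  split_ifs
  · exact le_refl 0
  · linarith [Mbig_pos (V := V) (C := C)]

lemma pot_none_nonpos (hfeas : feas V lo hi σ)
    (hopt : ∀ τ, feas V lo hi τ → objv τ C ≤ objv σ C)
    (hnone : none ∈ V) (hhin : hi none = n) : pot V lo C σ none ≤ 0 := by
  by_contra hpos
  push_neg at hpos
  have hful : cnt σ none = n := (pot_pos_full hfeas hopt hnone hpos).trans hhin
  have hall : ∀ j, σ j = none := by
    have huniv : (Finset.univ.filter fun j : Fin n => σ j = none) = Finset.univ :=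
      Finset.eq_univ_of_card _ (by rw [← cnt, hful, Fintype.card_fin])
    intro j
    have : j ∈ Finset.univ.filter fun j : Fin n => σ j = none := by
      rw [huniv]; exact Finset.mem_univ j
    exact (Finset.mem_filter.1 this).2
  obtain ⟨a, L, hch, hnd, haV, hLV, hr⟩ := pot_mem (lo := lo) (C := C) (b := none) hnone
  rcases eq_or_ne L [] with rfl | hL
  · rw [hr] at hpos
    simp only [gain, List.map_nil, List.sum_nil, add_zero] at hpos
    exact absurd hpos (not_lt.2 (start_nonpos a))
  · have hmap := chn_map_fst hch
    have hrep : (a :: L.map Prod.snd).dropLast = List.replicate L.length none := by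
      rw [← hmap]
      apply List.eq_replicate_iff.2
      exact ⟨by simp, fun o ho => by
        obtain ⟨m, hm, rfl⟩ := List.mem_map.1 ho; exact hall m.1⟩
    have hnd' : ((a :: L.map Prod.snd).dropLast).Nodup := hnd.sublist (List.dropLast_sublist _)
    rw [hrep] at hnd'
    have hlen : L.length ≤ 1 := List.nodup_replicate.1 hnd'
    have hlen1 : L.length = 1 := by
      rcases Nat.le_one_iff_eq_zero_or_eq_one.1 hlen with h | h
      · exact absurd (List.length_eq_zero_iff.1 h) hL
      · exact h
    obtain ⟨m, rfl⟩ := List.length_eq_one_iff.1 hlen1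
    obtain ⟨j, b⟩ := m
    rcases hch with _ | @⟨_, _, _, _, _, hj, hch'⟩
    rcases hch' with _ | _
    simp at hnd
    exact absurd (hall j) (by rw [hj]; exact hnd)

end PotNone

section Exist

variable {n : ℕ}

lemma exists_disjoint_sets (l : ℤ → ℕ) (s : Finset ℤ) (h : ∑ k ∈ s, l k ≤ n) :
    ∃ S : ℤ → Finset (Fin n), (∀ k ∈ s, (S k).card = l k) ∧
      ∀ k1 ∈ s, ∀ k2 ∈ s, k1 ≠ k2 → Disjoint (S k1) (S k2) := by
  induction s using Finset.induction_on with
  | empty => exact ⟨fun _ => ∅, by simp, by simp⟩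
  | @insert k s hk ih =>
    rw [Finset.sum_insert hk] at h
    obtain ⟨S, hcard, hdisj⟩ := ih (by omega)
    set U := s.biUnion S with hU
    have hUcard : U.card ≤ ∑ k' ∈ s, l k' := by
      calc U.card ≤ ∑ k' ∈ s, (S k').card := Finset.card_biUnion_le
        _ = ∑ k' ∈ s, l k' := Finset.sum_congr rfl fun k' hk' => hcard k' hk'
    have hle : l k ≤ (Finset.univ \ U).card := by
      rw [Finset.card_sdiff_of_subset (Finset.subset_univ U), Finset.card_univ, Fintype.card_fin]
      omega
    obtain ⟨T, hTsub, hTcard⟩ := Finset.exists_subset_card_eq hle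
    refine ⟨Function.update S k T, fun k' hk' => ?_, fun k1 hk1 k2 hk2 hne => ?_⟩
    · rcases Finset.mem_insert.1 hk' with rfl | hk'
      · rw [Function.update_self]; exact hTcard
      · rw [Function.update_of_ne (fun hkk => hk (by rw [← hkk]; exact hk'))]; exact hcard k' hk'
    · have hsubU : ∀ k' ∈ s, S k' ⊆ U := fun k' hk' => Finset.subset_biUnion_of_mem S hk'
      have hTU : Disjoint T U := by
        apply Finset.disjoint_left.2
        intro j hj hjU
        exact (Finset.mem_sdiff.1 (hTsub hj)).2 hjU
      rcases Finset.mem_insert.1 hk1 with rfl | hk1'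
      · have hk2' : k2 ∈ s := by
          rcases Finset.mem_insert.1 hk2 with rfl | h
          · exact absurd rfl hne
          · exact h
        rw [Function.update_self, Function.update_of_ne (fun h => hk (by rw [← h]; exact hk2'))]
        exact hTU.mono_right (hsubU k2 hk2')
      · rcases Finset.mem_insert.1 hk2 with rfl | hk2'
        · rw [Function.update_of_ne (fun h => hk (by rw [← h]; exact hk1')), Function.update_self]
          exact (hTU.mono_right (hsubU k1 hk1')).symm
        · rw [Function.update_of_ne (fun h => hk (by rw [← h]; exact hk1')),
            Function.update_of_ne (fun h => hk (by rw [← h]; exact hk2'))]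
          exact hdisj k1 hk1' k2 hk2' hne

end Exist

section Inst

/-- node set: `none` (unassigned) together with the bands -/
noncomputable def Vnodes (Km Kp : ℤ) : Finset (Option ℤ) := insert none ((bands Km Kp).image some)

def loN (l : ℤ → ℕ) : Option ℤ → ℕ := fun o => o.elim 0 l

def hiN (n : ℕ) (u : ℤ → ℕ) : Option ℤ → ℕ := fun o => o.elim n u

def Cof {n : ℕ} (d : Fin n → ℤ → ℝ) (x : Fin n → ℝ) : Fin n → Option ℤ → ℝ :=
  fun j o => o.elim 0 (fun k => d j k * x j)

variable {n : ℕ} {Km Kp : ℤ} {l u : ℤ → ℕ}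

lemma some_mem_Vnodes {k : ℤ} (hk : k ∈ bands Km Kp) : some k ∈ Vnodes Km Kp :=
  Finset.mem_insert_of_mem (Finset.mem_image_of_mem some hk)

lemma none_mem_Vnodes : (none : Option ℤ) ∈ Vnodes Km Kp := Finset.mem_insert_self _ _

lemma mem_Vnodes_iff {o : Option ℤ} :
    o ∈ Vnodes Km Kp ↔ o = none ∨ ∃ k ∈ bands Km Kp, o = some k := by
  simp [Vnodes, eq_comm]

lemma exists_feas (hlu : ∀ k ∈ bands Km Kp, l k ≤ u k)
    (hl : ∑ k ∈ bands Km Kp, l k ≤ n) :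
    ∃ σ : Fin n → Option ℤ, feas (Vnodes Km Kp) (loN l) (hiN n u) σ := by
  obtain ⟨S, hcard, hdisj⟩ := exists_disjoint_sets l (bands Km Kp) hl
  refine ⟨fun j => ((bands Km Kp).filter (fun k => j ∈ S k)).min, ?_, ?_⟩
  · intro j
    show ((bands Km Kp).filter (fun k => j ∈ S k)).min ∈ Vnodes Km Kp
    rcases h : ((bands Km Kp).filter (fun k => j ∈ S k)).min with _ | k
    · exact none_mem_Vnodes
    · exact some_mem_Vnodes (Finset.mem_filter.1 (Finset.mem_of_min h)).1
  · intro o ho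
    have hval : ∀ (k : ℤ), k ∈ bands Km Kp →
        ∀ j : Fin n, (((bands Km Kp).filter (fun k' => j ∈ S k')).min = some k ↔ j ∈ S k) := by
      intro k hk j
      constructor
      · intro h
        exact (Finset.mem_filter.1 (Finset.mem_of_min h)).2
      · intro hj
        have hsingle : (bands Km Kp).filter (fun k' => j ∈ S k') = {k} := by
          apply Finset.eq_singleton_iff_unique_mem.2
          refine ⟨Finset.mem_filter.2 ⟨hk, hj⟩, fun k' hk' => ?_⟩
          obtain ⟨hk'b, hjk'⟩ := Finset.mem_filter.1 hk'
          by_contra hne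
          exact Finset.disjoint_left.1 (hdisj k' hk'b k hk hne) hjk' hj
        rw [hsingle, Finset.min_singleton]
        rfl
    rcases mem_Vnodes_iff.1 ho with rfl | ⟨k, hk, rfl⟩
    · refine ⟨Nat.zero_le _, ?_⟩
      simp only [hiN, Option.elim, loN]
      calc cnt _ none ≤ Finset.univ.card := Finset.card_le_univ _
        _ = n := by rw [Finset.card_univ, Fintype.card_fin]
    · have hcnt : cnt (fun j => ((bands Km Kp).filter (fun k' => j ∈ S k')).min) (some k)
          = (S k).card := by
        unfold cnt
        congr 1
        ext j
        simp only [Finset.mem_filter, Finset.mem_univ, true_and]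
        exact hval k hk j
      rw [hcnt, hcard k hk]
      exact ⟨le_refl _, hlu k hk⟩

lemma exists_opt {C : Fin n → Option ℤ → ℝ} (hlu : ∀ k ∈ bands Km Kp, l k ≤ u k)
    (hl : ∑ k ∈ bands Km Kp, l k ≤ n) :
    ∃ σ : Fin n → Option ℤ, feas (Vnodes Km Kp) (loN l) (hiN n u) σ ∧
      ∀ τ, feas (Vnodes Km Kp) (loN l) (hiN n u) τ → objv τ C ≤ objv σ C := by
  classical
  set cands := (Fintype.piFinset fun _ : Fin n => Vnodes Km Kp).filter
    (fun σ => feas (Vnodes Km Kp) (loN l) (hiN n u) σ) with hcands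
  have hmem : ∀ σ, σ ∈ cands ↔ feas (Vnodes Km Kp) (loN l) (hiN n u) σ := by
    intro σ
    rw [hcands, Finset.mem_filter, Fintype.mem_piFinset]
    exact ⟨fun h => h.2, fun h => ⟨fun j => h.1 j, h⟩⟩
  obtain ⟨σ0, hσ0⟩ := exists_feas hlu hl
  obtain ⟨σ, hσmem, hσmax⟩ := Finset.exists_max_image cands (fun σ => objv σ C)
    ⟨σ0, (hmem σ0).2 hσ0⟩
  exact ⟨σ, (hmem σ).1 hσmem, fun τ hτ => hσmax τ ((hmem τ).2 hτ)⟩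

end Inst

section Final

variable {n : ℕ} {Km Kp : ℤ} {l u : ℤ → ℕ} {d : Fin n → ℤ → ℝ} {x : Fin n → ℝ}

lemma weak_duality {y : Fin n → ℤ → ℕ} (hy : memY n Km Kp l u y)
    {v w : ℤ → ℝ} {z : Fin n → ℝ}
    (hv : ∀ k ∈ bands Km Kp, 0 ≤ v k)
    (hw : ∀ k ∈ bands Km Kp, 0 ≤ w k)
    (hz : ∀ j : Fin n, 0 ≤ z j)
    (hcon : ∀ j : Fin n, ∀ k ∈ bands Km Kp, d j k * x j ≤ -v k + w k + z j) :
    ∑ j : Fin n, ∑ k ∈ bands Km Kp, d j k * x j * (y j k : ℝ)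
      ≤ -(∑ k ∈ bands Km Kp, (l k : ℝ) * v k) + (∑ k ∈ bands Km Kp, (u k : ℝ) * w k)
        + ∑ j : Fin n, z j := by
  obtain ⟨hy1, hy2, hy3⟩ := hy
  have step1 : ∑ j : Fin n, ∑ k ∈ bands Km Kp, d j k * x j * (y j k : ℝ)
      ≤ ∑ j : Fin n, ∑ k ∈ bands Km Kp, (-v k + w k + z j) * (y j k : ℝ) := by
    apply Finset.sum_le_sum
    intro j _
    apply Finset.sum_le_sum
    intro k hk
    exact mul_le_mul_of_nonneg_right (hcon j k hk) (Nat.cast_nonneg _)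
  have step2 : ∑ j : Fin n, ∑ k ∈ bands Km Kp, (-v k + w k + z j) * (y j k : ℝ)
      = (∑ k ∈ bands Km Kp, (-v k) * ∑ j : Fin n, (y j k : ℝ))
        + (∑ k ∈ bands Km Kp, w k * ∑ j : Fin n, (y j k : ℝ))
        + ∑ j : Fin n, z j * ∑ k ∈ bands Km Kp, (y j k : ℝ) := by
    have e1 : ∀ j : Fin n, ∑ k ∈ bands Km Kp, (-v k + w k + z j) * (y j k : ℝ)
        = (∑ k ∈ bands Km Kp, (-v k) * (y j k : ℝ))
          + (∑ k ∈ bands Km Kp, w k * (y j k : ℝ))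
          + z j * ∑ k ∈ bands Km Kp, (y j k : ℝ) := by
      intro j
      rw [Finset.mul_sum, ← Finset.sum_add_distrib, ← Finset.sum_add_distrib]
      apply Finset.sum_congr rfl
      intro k _
      ring
    rw [Finset.sum_congr rfl fun j _ => e1 j, Finset.sum_add_distrib,
      Finset.sum_add_distrib, Finset.sum_comm (f := fun j k => (-v k) * (y j k : ℝ)),
      Finset.sum_comm (f := fun j k => w k * (y j k : ℝ))]
    congr 1
    · congr 1
      · exact Finset.sum_congr rfl fun k _ => (Finset.mul_sum _ _ _).symm
      · exact Finset.sum_congr rfl fun k _ => (Finset.mul_sum _ _ _).symm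
  have b1 : ∑ k ∈ bands Km Kp, (-v k) * ∑ j : Fin n, (y j k : ℝ)
      ≤ -(∑ k ∈ bands Km Kp, (l k : ℝ) * v k) := by
    rw [← Finset.sum_neg_distrib]
    apply Finset.sum_le_sum
    intro k hk
    have hsum : (l k : ℝ) ≤ ∑ j : Fin n, (y j k : ℝ) := by
      have := (hy2 k hk).1
      push_cast
      exact_mod_cast this
    have := hv k hk
    nlinarith
  have b2 : ∑ k ∈ bands Km Kp, w k * ∑ j : Fin n, (y j k : ℝ)
      ≤ ∑ k ∈ bands Km Kp, (u k : ℝ) * w k := by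
    apply Finset.sum_le_sum
    intro k hk
    have hsum : ∑ j : Fin n, (y j k : ℝ) ≤ (u k : ℝ) := by
      have := (hy2 k hk).2
      exact_mod_cast this
    have := hw k hk
    nlinarith
  have b3 : ∑ j : Fin n, z j * ∑ k ∈ bands Km Kp, (y j k : ℝ) ≤ ∑ j : Fin n, z j := by
    apply Finset.sum_le_sum
    intro j _
    have hsum : ∑ k ∈ bands Km Kp, (y j k : ℝ) ≤ 1 := by
      have := hy3 j
      exact_mod_cast this
    have h0 : (0:ℝ) ≤ ∑ k ∈ bands Km Kp, (y j k : ℝ) :=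
      Finset.sum_nonneg fun k _ => Nat.cast_nonneg _
    nlinarith [hz j]
  calc ∑ j : Fin n, ∑ k ∈ bands Km Kp, d j k * x j * (y j k : ℝ)
      ≤ _ := step1
    _ = _ := step2
    _ ≤ -(∑ k ∈ bands Km Kp, (l k : ℝ) * v k) + (∑ k ∈ bands Km Kp, (u k : ℝ) * w k)
        + ∑ j : Fin n, z j := add_le_add (add_le_add b1 b2) b3

end Final

section Main

variable {n : ℕ} {Km Kp : ℤ} {l u : ℤ → ℕ} {d : Fin n → ℤ → ℝ} {x : Fin n → ℝ}

lemma strong_duality (hlu : ∀ k ∈ bands Km Kp, l k ≤ u k)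
    (hl : ∑ k ∈ bands Km Kp, l k ≤ n) :
    ∃ (σ : Fin n → Option ℤ) (v w : ℤ → ℝ) (z : Fin n → ℝ),
      feas (Vnodes Km Kp) (loN l) (hiN n u) σ ∧
      (∀ k ∈ bands Km Kp, 0 ≤ v k) ∧ (∀ k ∈ bands Km Kp, 0 ≤ w k) ∧
      (∀ j : Fin n, 0 ≤ z j) ∧
      (∀ j : Fin n, ∀ k ∈ bands Km Kp, d j k * x j ≤ -v k + w k + z j) ∧
      -(∑ k ∈ bands Km Kp, (l k : ℝ) * v k) + (∑ k ∈ bands Km Kp, (u k : ℝ) * w k)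
          + ∑ j : Fin n, z j = objv σ (Cof d x) := by
  classical
  set V := Vnodes Km Kp with hV
  set lo := loN l with hlo
  set hi := hiN n u with hhi
  set C := Cof d x with hC
  obtain ⟨σ, hfeas, hopt⟩ := exists_opt (C := C) hlu hl
  set p := pot V lo C σ with hp
  have hbell : ∀ (j : Fin n) (b : Option ℤ), b ∈ V → p (σ j) + (C j b - C j (σ j)) ≤ p b :=
    fun j b hb => pot_bellman hfeas hopt j hb
  have hsrc0 : ∀ b ∈ V, lo b < cnt σ b → 0 ≤ p b := fun b hb h => pot_nonneg_of_src hb h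
  have hfull : ∀ b ∈ V, 0 < p b → cnt σ b = hi b :=
    fun b hb h => pot_pos_full hfeas hopt hb h
  have hpnone : p none ≤ 0 := pot_none_nonpos hfeas hopt none_mem_Vnodes rfl
  set v : ℤ → ℝ := fun k => max 0 (-(p (some k))) with hv
  set w : ℤ → ℝ := fun k => max 0 (p (some k)) with hw
  set z : Fin n → ℝ := fun j => C j (σ j) - p (σ j) with hz
  have hCnone : ∀ j : Fin n, C j none = 0 := fun j => rfl
  have hCsome : ∀ (j : Fin n) (k : ℤ), C j (some k) = d j k * x j := fun j k => rfl
  have hz0 : ∀ j : Fin n, 0 ≤ z j := by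
    intro j
    have := hbell j none none_mem_Vnodes
    rw [hCnone j] at this
    simp only [hz]
    linarith
  have hvw : ∀ k : ℤ, -v k + w k = p (some k) := by
    intro k
    simp only [hv, hw]
    rcases le_total 0 (p (some k)) with h | h
    · rw [max_eq_right h, max_eq_left (by linarith)]; ring
    · rw [max_eq_left h, max_eq_right (by linarith)]; ring
  have hcon : ∀ j : Fin n, ∀ k ∈ bands Km Kp, d j k * x j ≤ -v k + w k + z j := by
    intro j k hk
    have := hbell j (some k) (some_mem_Vnodes hk)
    rw [hCsome j k] at this
    rw [hvw k]
    simp only [hz]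
    linarith
  have hband : ∀ k ∈ bands Km Kp,
      -((l k : ℝ) * v k) + (u k : ℝ) * w k = (cnt σ (some k) : ℝ) * p (some k) := by
    intro k hk
    have hmem : some k ∈ V := some_mem_Vnodes hk
    have hlok : lo (some k) = l k := rfl
    have hhik : hi (some k) = u k := rfl
    rcases lt_trichotomy (p (some k)) 0 with hneg | hzero | hpos
    · have hwk : w k = 0 := by simp only [hw]; exact max_eq_left (by linarith)
      have hvk : v k = -(p (some k)) := by simp only [hv]; exact max_eq_right (by linarith)
      have hcnt : cnt σ (some k) = l k := by
        have h1 : ¬ lo (some k) < cnt σ (some k) := fun h => absurd (hsrc0 _ hmem h) (by linarith)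
        have h1' : ¬ l k < cnt σ (some k) := h1
        have h2' : l k ≤ cnt σ (some k) := (hfeas.2 (some k) hmem).1
        omega
      rw [hwk, hvk, hcnt]
      ring
    · have hwk : w k = 0 := by simp only [hw, hzero]; exact max_eq_left (le_refl 0)
      have hvk : v k = 0 := by simp only [hv, hzero]; simp
      rw [hwk, hvk, hzero]
      ring
    · have hwk : w k = p (some k) := by simp only [hw]; exact max_eq_right (by linarith)
      have hvk : v k = 0 := by simp only [hv]; exact max_eq_left (by linarith)
      have hcnt : cnt σ (some k) = u k := by rw [hfull _ hmem hpos, hhik]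
      rw [hwk, hvk, hcnt]
      ring
  have hnoneterm : (cnt σ none : ℝ) * p none = 0 := by
    rcases eq_or_lt_of_le hpnone with h | h
    · rw [h, mul_zero]
    · have hcnt : cnt σ none = 0 := by
        have h1 : ¬ lo none < cnt σ none := fun hlt => absurd (hsrc0 _ none_mem_Vnodes hlt)
          (by linarith)
        have : lo none = 0 := rfl
        omega
      rw [hcnt]
      simp
  have hsplitV : ∀ F : Option ℤ → ℝ,
      ∑ o ∈ V, F o = F none + ∑ k ∈ bands Km Kp, F (some k) := by
    intro F
    rw [hV, Vnodes, Finset.sum_insert (by simp), Finset.sum_image (fun a _ b _ h =>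
      Option.some_injective ℤ h)]
  have hfiber : ∑ j : Fin n, p (σ j) = ∑ o ∈ V, (cnt σ o : ℝ) * p o := by
    rw [← Finset.sum_fiberwise_of_maps_to (fun j _ => hfeas.1 j) (fun j => p (σ j))]
    apply Finset.sum_congr rfl
    intro o ho
    rw [Finset.sum_congr rfl (fun j hj => by rw [(Finset.mem_filter.1 hj).2]),
      Finset.sum_const, cnt, nsmul_eq_mul]
  have hzsum : ∑ j : Fin n, z j = objv σ C - ∑ j : Fin n, p (σ j) := by
    simp only [hz, objv]
    rw [Finset.sum_sub_distrib]
  refine ⟨σ, v, w, z, hfeas, fun k _ => le_max_left _ _, fun k _ => le_max_left _ _, hz0, hcon, ?_⟩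
  have e1 : -(∑ k ∈ bands Km Kp, (l k : ℝ) * v k) + (∑ k ∈ bands Km Kp, (u k : ℝ) * w k)
      = ∑ k ∈ bands Km Kp, (cnt σ (some k) : ℝ) * p (some k) := by
    rw [← Finset.sum_neg_distrib, ← Finset.sum_add_distrib]
    exact Finset.sum_congr rfl fun k hk => hband k hk
  rw [hzsum, hfiber, hsplitV (fun o => (cnt σ o : ℝ) * p o)]
  rw [show -(∑ k ∈ bands Km Kp, (l k : ℝ) * v k) + (∑ k ∈ bands Km Kp, (u k : ℝ) * w k)
      + (objv σ C - ((cnt σ none : ℝ) * p none + ∑ k ∈ bands Km Kp, (cnt σ (some k) : ℝ) * p (some k)))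
    = (-(∑ k ∈ bands Km Kp, (l k : ℝ) * v k) + (∑ k ∈ bands Km Kp, (u k : ℝ) * w k))
      - (∑ k ∈ bands Km Kp, (cnt σ (some k) : ℝ) * p (some k))
      - (cnt σ none : ℝ) * p none + objv σ C by ring]
  rw [e1, hnoneterm]
  ring

end Main

section Conv

variable {n : ℕ} {Km Kp : ℤ} {l u : ℤ → ℕ} {d : Fin n → ℤ → ℝ} {x : Fin n → ℝ}

lemma feas_to_y {σ : Fin n → Option ℤ} (hfeas : feas (Vnodes Km Kp) (loN l) (hiN n u) σ) :
    memY n Km Kp l u (fun j k => if σ j = some k then 1 else 0) ∧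
    objv σ (Cof d x) = ∑ j : Fin n, ∑ k ∈ bands Km Kp,
      d j k * x j * ((if σ j = some k then (1:ℕ) else 0) : ℝ) := by
  have hcnt : ∀ k : ℤ, (∑ j : Fin n, if σ j = some k then 1 else 0) = cnt σ (some k) := by
    intro k
    rw [cnt, Finset.card_filter]
  constructor
  · refine ⟨fun j k _ => by dsimp only; split_ifs <;> norm_num, fun k hk => ?_, fun j => ?_⟩
    · dsimp only
      rw [hcnt k]
      have := hfeas.2 (some k) (some_mem_Vnodes hk)
      exact ⟨this.1, this.2⟩
    · dsimp only
      rcases hσj : σ j with _ | k₀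
      · simp
      · have heq : ∀ k ∈ bands Km Kp, (if some k₀ = some k then (1:ℕ) else 0)
            = if k = k₀ then 1 else 0 := fun k _ => by simp [eq_comm]
        rw [Finset.sum_congr rfl heq, Finset.sum_ite_eq' (bands Km Kp) k₀ (fun _ => 1)]
        split_ifs <;> norm_num
  · apply Finset.sum_congr rfl
    intro j _
    rcases hσj : σ j with _ | k₀
    · rw [Finset.sum_eq_zero (fun k _ => by simp)]
      rfl
    · have hk₀ : k₀ ∈ bands Km Kp := by
        rcases mem_Vnodes_iff.1 (hfeas.1 j) with h | ⟨k, hk, h⟩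
        · rw [hσj] at h; exact absurd h (by simp)
        · rw [hσj] at h
          obtain rfl : k₀ = k := by injection h
          exact hk
      rw [Finset.sum_eq_single k₀]
      · simp [Cof]
      · intro k _ hne
        simp only [Option.some.injEq]
        rw [if_neg (fun h : k₀ = k => hne h.symm)]
        norm_num
      · intro h
        exact absurd hk₀ h

/-- for every `x ≥ 0`, the maximum deviation
`DEV_i(x) = max_{y ∈ Y_i} ∑_j ∑_k d^k_{ij} x_j y_{jk}` equals the minimum of
`-∑_k l_k v_k + ∑_k u_k w_k + ∑_j z_j` over nonnegative `v, w, z` satisfying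
`-v_k + w_k + z_j ≥ d^k_{ij} x_j` for all `j ∈ J`, `k ∈ K`, and this minimum is attained. -/
theorem stmt_5 (n : ℕ) (hn : 0 < n) (Km Kp : ℤ) (hKm : Km < 0) (hKp : 0 < Kp)
    (d : Fin n → ℤ → ℝ) (hd0 : ∀ j : Fin n, d j 0 = 0)
    (l u : ℤ → ℕ)
    (hlu : ∀ k ∈ bands Km Kp, l k ≤ u k)
    (hun : ∀ k ∈ bands Km Kp, u k ≤ n)
    (hu0 : u 0 = n)
    (hl : ∑ k ∈ bands Km Kp, l k ≤ n)
    (x : Fin n → ℝ) (hx : ∀ j, 0 ≤ x j) :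
    ∃ D : ℝ,
      IsGreatest (devSet n Km Kp l u d x) D ∧
      IsLeast {t : ℝ | ∃ (v w : ℤ → ℝ) (z : Fin n → ℝ),
        (∀ k ∈ bands Km Kp, 0 ≤ v k) ∧ (∀ k ∈ bands Km Kp, 0 ≤ w k) ∧
        (∀ j : Fin n, 0 ≤ z j) ∧
        (∀ j : Fin n, ∀ k ∈ bands Km Kp, d j k * x j ≤ -v k + w k + z j) ∧
        t = -(∑ k ∈ bands Km Kp, (l k : ℝ) * v k) + (∑ k ∈ bands Km Kp, (u k : ℝ) * w k)
            + ∑ j : Fin n, z j} D := by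
  obtain ⟨σ, v, w, z, hfeas, hv0, hw0, hz0, hcon, heq⟩ := strong_duality (d := d) (x := x) hlu hl
  obtain ⟨hymem, hyval⟩ := feas_to_y (d := d) (x := x) hfeas
  refine ⟨objv σ (Cof d x),
    ⟨⟨fun j k => if σ j = some k then 1 else 0, hymem, by exact_mod_cast hyval⟩,
      fun r hr => ?_⟩,
    ⟨⟨v, w, z, hv0, hw0, hz0, hcon, heq.symm⟩, fun t ht => ?_⟩⟩
  · obtain ⟨y', hy', rfl⟩ := hr
    calc ∑ j : Fin n, ∑ k ∈ bands Km Kp, d j k * x j * (y' j k : ℝ)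
        ≤ -(∑ k ∈ bands Km Kp, (l k : ℝ) * v k) + (∑ k ∈ bands Km Kp, (u k : ℝ) * w k)
          + ∑ j : Fin n, z j := weak_duality hy' hv0 hw0 hz0 hcon
      _ = objv σ (Cof d x) := heq
  · obtain ⟨v', w', z', hv', hw', hz', hcon', rfl⟩ := ht
    calc objv σ (Cof d x)
        = ∑ j : Fin n, ∑ k ∈ bands Km Kp,
            d j k * x j * ((if σ j = some k then (1:ℕ) else 0) : ℝ) := hyval
      _ ≤ -(∑ k ∈ bands Km Kp, (l k : ℝ) * v' k) + (∑ k ∈ bands Km Kp, (u k : ℝ) * w' k)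
          + ∑ j : Fin n, z' j := by exact_mod_cast weak_duality hymem hv' hw' hz' hcon'
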